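/- Let $n \geq s+1$, and for each partition $B \in \rho_s(n)$ with block sizes $b_1,\dots,b_s$, suppose that for every split of a block $B_i$ into two nonempty parts of sizes $j$ and $b_i - j$ the corresponding marginal ratio satisfies $\frac{m(x_{A_i}) m(x_{A_{s+1}})}{m(x_{B_i})} \geq \frac{c_1\sqrt{2\pi}}{|\Theta|}\sqrt{\frac{b_i}{j(b_i-j)}}$. Then $\sum_{A \in \eta_{ext}(B)} \frac{p(A,x)}{p(B,x)} \geq \frac{\alpha c_1 \sqrt{2\pi}}{|\Theta|} \sum_{i=1}^{s} \sum_{j=1}^{b_i - 1}\binom{b_i}{j}\frac{(j-1)!(b_i-j-1)!}{(b_i-1)!}\sqrt{\frac{b_i}{j(b_i-j)}} \cdot \frac{1}{2} = \frac{\alpha c_1\sqrt{2\pi}}{2|\Theta|}\sum_{i=1}^s \sum_{j=1}^{b_i-1}\left(\frac{b_i}{j(b_i-j)}\right)^{3/2} \geq \frac{\alpha c_1\sqrt{2\pi}}{|\Theta|} \cdot \#\{i : b_i \geq 2\}$, using the identity $\binom{b_i}{j}\frac{(j-1)!(b_i-j-1)!}{(b_i-1)!} = \frac{b_i}{j(b_i-j)}$.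 -/

import Mathlib

open scoped Classical

/-- `P` is a partition of `Fin n`: no empty block, and every element lies in a unique block. -/
def IsPartition {n : ℕ} (P : Finset (Finset (Fin n))) : Prop :=
  (∅ ∉ P) ∧ ∀ i : Fin n, ∃! b, b ∈ P ∧ i ∈ b

/-- The set `ρ_k(n)` of partitions of `[n]` into exactly `k` nonempty blocks. -/
noncomputable def rho (n k : ℕ) : Finset (Finset (Finset (Fin n))) :=
  Finset.univ.filter (fun P => IsPartition P ∧ P.card = k)

/-- `B` arises from `A` by merging exactly two blocks of `A` into one. -/
def MergeOf {n : ℕ} (B A : Finset (Finset (Fin n))) : Prop :=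
  ∃ a₁ ∈ A, ∃ a₂ ∈ A, a₁ ≠ a₂ ∧ B = insert (a₁ ∪ a₂) ((A.erase a₁).erase a₂)

/-- The rising factorial `α^{(n)} = α(α+1)⋯(α+n-1)`. -/
noncomputable def ascF (α : ℝ) (n : ℕ) : ℝ := ∏ i ∈ Finset.range n, (α + i)

/-- The unnormalized DPMM posterior weight of a partition `A`, given the per-cluster
marginal likelihoods `marg`. -/
noncomputable def dpWeight (α : ℝ) (n : ℕ) (marg : Finset (Fin n) → ℝ)
    (A : Finset (Finset (Fin n))) : ℝ :=
  α ^ A.card / ascF α n * ∏ t ∈ A, ((Nat.factorial (t.card - 1) : ℝ) * marg t)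

namespace Stmt18Aux

variable {n : ℕ} {B : Finset (Finset (Fin n))} {t a : Finset (Fin n)}

lemma block_eq (hBp : IsPartition B) {b c : Finset (Fin n)} (hb : b ∈ B) (hc : c ∈ B)
    {x : Fin n} (hxb : x ∈ b) (hxc : x ∈ c) : b = c := by
  obtain ⟨u, _, hu⟩ := hBp.2 x
  rw [hu b ⟨hb, hxb⟩, hu c ⟨hc, hxc⟩]

lemma sdiff_ne (hat : a ⊆ t) (hane : a.Nonempty) (hne : a ≠ t) : (t \ a).Nonempty :=
  Finset.sdiff_nonempty.mpr fun h => hne (subset_antisymm hat h)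

lemma a_ne_sdiff (hane : a.Nonempty) : a ≠ t \ a := by
  obtain ⟨x, hx⟩ := hane
  intro h
  have : x ∈ t \ a := h ▸ hx
  exact (Finset.mem_sdiff.mp this).2 hx

lemma t_ne_sdiff (hat : a ⊆ t) (hane : a.Nonempty) : t ≠ t \ a := by
  obtain ⟨x, hx⟩ := hane
  intro h
  have : x ∈ t \ a := h ▸ hat hx
  exact (Finset.mem_sdiff.mp this).2 hx

lemma a_not_mem (hBp : IsPartition B) (ht : t ∈ B) (hat : a ⊆ t) (hane : a.Nonempty)
    (hne : a ≠ t) : a ∉ B := by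
  intro haB
  obtain ⟨x, hx⟩ := hane
  exact hne (block_eq hBp haB ht hx (hat hx))

lemma sdiff_not_mem (hBp : IsPartition B) (ht : t ∈ B) (hat : a ⊆ t) (hane : a.Nonempty)
    (hne : a ≠ t) : t \ a ∉ B := by
  intro hdB
  obtain ⟨x, hx⟩ := sdiff_ne hat hane hne
  have hmem := Finset.mem_sdiff.mp hx
  have heq := block_eq hBp hdB ht hx hmem.1
  exact t_ne_sdiff hat hane heq.symm


/-- The refinement obtained by splitting block `t` of `B` into `a` and `t \ a`. -/
noncomputable def phi (B : Finset (Finset (Fin n))) (t a : Finset (Fin n)) :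
    Finset (Finset (Fin n)) :=
  insert a (insert (t \ a) (B.erase t))

lemma a_not_mem_inner (hBp : IsPartition B) (ht : t ∈ B) (hat : a ⊆ t) (hane : a.Nonempty)
    (hne : a ≠ t) : a ∉ insert (t \ a) (B.erase t) := by
  intro h
  rcases Finset.mem_insert.mp h with h | h
  · exact a_ne_sdiff hane h
  · exact a_not_mem hBp ht hat hane hne (Finset.mem_of_mem_erase h)

lemma sdiff_not_mem_inner (hBp : IsPartition B) (ht : t ∈ B) (hat : a ⊆ t) (hane : a.Nonempty)
    (hne : a ≠ t) : t \ a ∉ B.erase t :=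
  fun h => sdiff_not_mem hBp ht hat hane hne (Finset.mem_of_mem_erase h)

lemma phi_card (hBp : IsPartition B) (ht : t ∈ B) (hat : a ⊆ t) (hane : a.Nonempty)
    (hne : a ≠ t) : (phi B t a).card = B.card + 1 := by
  unfold phi
  rw [Finset.card_insert_of_notMem (a_not_mem_inner hBp ht hat hane hne),
    Finset.card_insert_of_notMem (sdiff_not_mem_inner hBp ht hat hane hne),
    Finset.card_erase_of_mem ht]
  have : 1 ≤ B.card := Finset.card_pos.mpr ⟨t, ht⟩
  omega

lemma t_not_mem_phi (hBp : IsPartition B) (ht : t ∈ B) (hat : a ⊆ t) (hane : a.Nonempty)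
    (hne : a ≠ t) : t ∉ phi B t a := by
  intro h
  rcases Finset.mem_insert.mp h with h | h
  · exact hne h.symm
  rcases Finset.mem_insert.mp h with h | h
  · exact t_ne_sdiff hat hane h
  · exact Finset.notMem_erase t B h

lemma phi_partition (hBp : IsPartition B) (ht : t ∈ B) (hat : a ⊆ t) (hane : a.Nonempty)
    (hne : a ≠ t) : IsPartition (phi B t a) := by
  constructor
  · intro h
    rcases Finset.mem_insert.mp h with h | h
    · exact hane.ne_empty h.symm
    rcases Finset.mem_insert.mp h with h | h
    · exact (sdiff_ne hat hane hne).ne_empty h.symm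
    · exact hBp.1 (Finset.mem_of_mem_erase h)
  · intro i
    obtain ⟨b, ⟨hbB, hib⟩, hbu⟩ := hBp.2 i
    by_cases hbt : b = t
    · rw [hbt] at hib hbu
      by_cases hia : i ∈ a
      · refine ⟨a, ⟨Finset.mem_insert_self _ _, hia⟩, ?_⟩
        rintro c ⟨hc, hic⟩
        rcases Finset.mem_insert.mp hc with hc | hc
        · exact hc
        rcases Finset.mem_insert.mp hc with hc | hc
        · rw [hc] at hic
          exact absurd hia (Finset.mem_sdiff.mp hic).2
        · exact absurd (hbu c ⟨Finset.mem_of_mem_erase hc, hic⟩) (Finset.ne_of_mem_erase hc)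
      · refine ⟨t \ a, ⟨Finset.mem_insert_of_mem (Finset.mem_insert_self _ _),
          Finset.mem_sdiff.mpr ⟨hib, hia⟩⟩, ?_⟩
        rintro c ⟨hc, hic⟩
        rcases Finset.mem_insert.mp hc with hc | hc
        · rw [hc] at hic
          exact absurd hic hia
        rcases Finset.mem_insert.mp hc with hc | hc
        · exact hc
        · exact absurd (hbu c ⟨Finset.mem_of_mem_erase hc, hic⟩) (Finset.ne_of_mem_erase hc)
    · refine ⟨b, ⟨Finset.mem_insert_of_mem (Finset.mem_insert_of_mem
        (Finset.mem_erase.mpr ⟨hbt, hbB⟩)), hib⟩, ?_⟩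
      rintro c ⟨hc, hic⟩
      rcases Finset.mem_insert.mp hc with hc | hc
      · rw [hc] at hic
        exact absurd (hbu t ⟨ht, hat hic⟩) (fun h => hbt h.symm)
      rcases Finset.mem_insert.mp hc with hc | hc
      · rw [hc] at hic
        exact absurd (hbu t ⟨ht, (Finset.mem_sdiff.mp hic).1⟩) (fun h => hbt h.symm)
      · exact block_eq hBp (Finset.mem_of_mem_erase hc) hbB hic hib

lemma phi_mergeOf (hBp : IsPartition B) (ht : t ∈ B) (hat : a ⊆ t) (hane : a.Nonempty)
    (hne : a ≠ t) :
    ∃ a₁ ∈ phi B t a, ∃ a₂ ∈ phi B t a, a₁ ≠ a₂ ∧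
      B = insert (a₁ ∪ a₂) (((phi B t a).erase a₁).erase a₂) := by
  refine ⟨a, Finset.mem_insert_self _ _,
    t \ a, Finset.mem_insert_of_mem (Finset.mem_insert_self _ _), a_ne_sdiff hane, ?_⟩
  rw [Finset.union_sdiff_of_subset hat]
  unfold phi
  rw [Finset.erase_insert (a_not_mem_inner hBp ht hat hane hne),
    Finset.erase_insert (sdiff_not_mem_inner hBp ht hat hane hne),
    Finset.insert_erase ht]

lemma phi_fiber {t' a' : Finset (Fin n)} (hBp : IsPartition B)
    (ht : t ∈ B) (hat : a ⊆ t) (hane : a.Nonempty) (hne : a ≠ t)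
    (ht' : t' ∈ B) (hat' : a' ⊆ t') (hane' : a'.Nonempty) (hne' : a' ≠ t')
    (h : phi B t' a' = phi B t a) : t' = t ∧ (a' = a ∨ a' = t \ a) := by
  have htt : t' = t := by
    by_contra hcon
    have : t' ∈ phi B t a :=
      Finset.mem_insert_of_mem (Finset.mem_insert_of_mem (Finset.mem_erase.mpr ⟨hcon, ht'⟩))
    rw [← h] at this
    exact t_not_mem_phi hBp ht' hat' hane' hne' this
  rw [htt] at hat' hne'
  refine ⟨htt, ?_⟩
  have ha' : a' ∈ phi B t a := h ▸ Finset.mem_insert_self _ _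
  rcases Finset.mem_insert.mp ha' with hx | hx
  · exact Or.inl hx
  rcases Finset.mem_insert.mp hx with hx | hx
  · exact Or.inr hx
  · exact absurd (Finset.mem_of_mem_erase hx)
      (a_not_mem hBp ht hat' hane' hne')


lemma ascF_pos {α : ℝ} (hα : 0 < α) (n : ℕ) : 0 < ascF α n :=
  Finset.prod_pos fun i _ => by positivity

lemma dpWeight_pos {α : ℝ} (hα : 0 < α) {marg : Finset (Fin n) → ℝ}
    (hm : ∀ t : Finset (Fin n), t.Nonempty → 0 < marg t)
    {P : Finset (Finset (Fin n))} (hP : IsPartition P) : 0 < dpWeight α n marg P := by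
  unfold dpWeight
  have h1 : 0 < α ^ P.card / ascF α n := div_pos (pow_pos hα _) (ascF_pos hα n)
  refine mul_pos h1 (Finset.prod_pos fun t ht => ?_)
  have htne : t.Nonempty := Finset.nonempty_iff_ne_empty.mpr fun h => hP.1 (h ▸ ht)
  have := hm t htne
  positivity

lemma dpWeight_phi {α : ℝ} (hα : 0 < α) {marg : Finset (Fin n) → ℝ}
    (hm : ∀ t : Finset (Fin n), t.Nonempty → 0 < marg t)
    (hBp : IsPartition B) (ht : t ∈ B) (hat : a ⊆ t) (hane : a.Nonempty) (hne : a ≠ t) :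
    dpWeight α n marg (phi B t a) =
      α * ((Nat.factorial (a.card - 1) : ℝ) * (Nat.factorial ((t \ a).card - 1) : ℝ) /
          (Nat.factorial (t.card - 1) : ℝ) *
        (marg a * marg (t \ a) / marg t)) * dpWeight α n marg B := by
  have htne : t.Nonempty := hane.mono hat
  have hmt : 0 < marg t := hm t htne
  have hft : (0 : ℝ) < (Nat.factorial (t.card - 1) : ℝ) := by positivity
  unfold dpWeight
  rw [phi_card hBp ht hat hane hne]
  unfold phi
  rw [Finset.prod_insert (a_not_mem_inner hBp ht hat hane hne),
    Finset.prod_insert (sdiff_not_mem_inner hBp ht hat hane hne),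
    ← Finset.mul_prod_erase B _ ht, pow_succ]
  have hasc : ascF α n ≠ 0 := (ascF_pos hα n).ne'
  field_simp


lemma choose_frac {b j : ℕ} (hj : 1 ≤ j) (hjb : j < b) :
    (b.choose j : ℝ) * ((Nat.factorial (j - 1) : ℝ) * (Nat.factorial (b - j - 1) : ℝ) /
        (Nat.factorial (b - 1) : ℝ)) =
      (b : ℝ) / ((j : ℝ) * ((b : ℝ) - (j : ℝ))) := by
  have hnat : b.choose j * (Nat.factorial (j - 1) * Nat.factorial (b - j - 1)) * (j * (b - j)) =
      b * Nat.factorial (b - 1) := by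
    have h1 := Nat.choose_mul_factorial_mul_factorial (le_of_lt hjb)
    have h2 : j * Nat.factorial (j - 1) = Nat.factorial j := Nat.mul_factorial_pred (by omega)
    have h3 : (b - j) * Nat.factorial (b - j - 1) = Nat.factorial (b - j) :=
      Nat.mul_factorial_pred (by omega)
    have h4 : b * Nat.factorial (b - 1) = Nat.factorial b := Nat.mul_factorial_pred (by omega)
    rw [h4, ← h1, ← h2, ← h3]
    ring
  have hbj : ((b : ℝ) - (j : ℝ)) = ((b - j : ℕ) : ℝ) := by
    rw [Nat.cast_sub (le_of_lt hjb)]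
  have hcast : (b.choose j : ℝ) * ((Nat.factorial (j - 1) : ℝ) * (Nat.factorial (b - j - 1) : ℝ))
      * ((j : ℝ) * ((b - j : ℕ) : ℝ)) = (b : ℝ) * (Nat.factorial (b - 1) : ℝ) := by
    exact_mod_cast congrArg (Nat.cast : ℕ → ℝ) hnat
  have hfac : (Nat.factorial (b - 1) : ℝ) ≠ 0 := Nat.cast_ne_zero.mpr (Nat.factorial_ne_zero _)
  have hjz : (j : ℝ) ≠ 0 := Nat.cast_ne_zero.mpr (by omega)
  have hbjz : ((b - j : ℕ) : ℝ) ≠ 0 := Nat.cast_ne_zero.mpr (by omega)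
  rw [hbj]
  field_simp
  linear_combination hcast

lemma rpow_three_halves {x : ℝ} (hx : 0 < x) : x ^ ((3 : ℝ) / 2) = x * Real.sqrt x := by
  have : (3 : ℝ) / 2 = 1 + 1 / 2 := by norm_num
  rw [this, Real.rpow_add hx, Real.rpow_one, ← Real.sqrt_eq_rpow]


lemma term_nonneg {b j : ℕ} (hj : j ∈ Finset.Icc 1 (b - 1)) :
    (0 : ℝ) ≤ ((b : ℝ) / ((j : ℝ) * ((b : ℝ) - (j : ℝ)))) ^ ((3 : ℝ) / 2) := by
  obtain ⟨hj1, hj2⟩ := Finset.mem_Icc.mp hj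
  have hjb : (j : ℝ) ≤ (b : ℝ) := by exact_mod_cast (by omega : j ≤ b)
  apply Real.rpow_nonneg
  apply div_nonneg (by positivity)
  have : (0:ℝ) ≤ (b:ℝ) - (j:ℝ) := by linarith
  positivity

lemma term_ge_one {b j : ℕ} (hj1 : 1 ≤ j) (hj2 : j < b) (hjb : j * (b - j) ≤ b) :
    (1 : ℝ) ≤ ((b : ℝ) / ((j : ℝ) * ((b : ℝ) - (j : ℝ)))) ^ ((3 : ℝ) / 2) := by
  have hbj : ((b : ℝ) - (j : ℝ)) = ((b - j : ℕ) : ℝ) := by rw [Nat.cast_sub (le_of_lt hj2)]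
  have hpos : (0:ℝ) < (j : ℝ) * ((b - j : ℕ) : ℝ) := by
    have h1 : 0 < j := hj1
    have h2 : 0 < b - j := by omega
    positivity
  have hbase : (1:ℝ) ≤ (b : ℝ) / ((j : ℝ) * ((b : ℝ) - (j : ℝ))) := by
    rw [hbj, le_div_iff₀ hpos, one_mul]
    exact_mod_cast hjb
  calc (1:ℝ) = (1:ℝ) ^ ((3:ℝ)/2) := (Real.one_rpow _).symm
    _ ≤ _ := Real.rpow_le_rpow (by norm_num) hbase (by norm_num)

lemma sum_rpow_ge_two {b : ℕ} (hb : 2 ≤ b) :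
    (2 : ℝ) ≤ ∑ j ∈ Finset.Icc 1 (b - 1),
      ((b : ℝ) / ((j : ℝ) * ((b : ℝ) - (j : ℝ)))) ^ ((3 : ℝ) / 2) := by
  by_cases hb2 : b = 2
  · subst hb2
    rw [show Finset.Icc 1 (2 - 1) = {1} from rfl, Finset.sum_singleton]
    have h2 : ((2:ℕ):ℝ) / ((1:ℕ):ℝ) * (((2:ℕ):ℝ) - ((1:ℕ):ℝ)) = 2 := by norm_num
    calc (2:ℝ) = (2:ℝ) ^ (1:ℝ) := (Real.rpow_one 2).symm
      _ ≤ (2:ℝ) ^ ((3:ℝ)/2) := Real.rpow_le_rpow_of_exponent_le (by norm_num) (by norm_num)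
      _ = _ := by norm_num
  · have hb3 : 3 ≤ b := by omega
    have hsub : ({1, b - 1} : Finset ℕ) ⊆ Finset.Icc 1 (b - 1) := by
      intro x hx
      rcases Finset.mem_insert.mp hx with rfl | hx
      · exact Finset.mem_Icc.mpr ⟨le_refl _, by omega⟩
      · rw [Finset.mem_singleton.mp hx]
        exact Finset.mem_Icc.mpr ⟨by omega, le_refl _⟩
    have hne : (1 : ℕ) ≠ b - 1 := by omega
    have hpair : ∑ j ∈ ({1, b - 1} : Finset ℕ),
        ((b : ℝ) / ((j : ℝ) * ((b : ℝ) - (j : ℝ)))) ^ ((3 : ℝ) / 2) =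
        ((b : ℝ) / (((1:ℕ) : ℝ) * ((b : ℝ) - ((1:ℕ) : ℝ)))) ^ ((3 : ℝ) / 2) +
        ((b : ℝ) / (((b-1:ℕ) : ℝ) * ((b : ℝ) - ((b-1:ℕ) : ℝ)))) ^ ((3 : ℝ) / 2) :=
      Finset.sum_pair hne
    have h1 : (1:ℝ) ≤ ((b : ℝ) / (((1:ℕ) : ℝ) * ((b : ℝ) - ((1:ℕ) : ℝ)))) ^ ((3 : ℝ) / 2) :=
      term_ge_one (le_refl 1) (by omega) (by omega)
    have h2 : (1:ℝ) ≤ ((b : ℝ) / (((b-1:ℕ) : ℝ) * ((b : ℝ) - ((b-1:ℕ) : ℝ)))) ^ ((3 : ℝ) / 2) :=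
      term_ge_one (by omega) (by omega)
        (by have h : b - (b - 1) = 1 := by omega
            rw [h]; omega)
    calc (2:ℝ) ≤ ∑ j ∈ ({1, b - 1} : Finset ℕ),
          ((b : ℝ) / ((j : ℝ) * ((b : ℝ) - (j : ℝ)))) ^ ((3 : ℝ) / 2) := by
          rw [hpair]; linarith
      _ ≤ _ := Finset.sum_le_sum_of_subset_of_nonneg hsub (fun i hi _ => term_nonneg hi)

end Stmt18Aux

theorem stmt_18 (n s : ℕ) (hs : 1 ≤ s) (hn : s + 1 ≤ n)
    (α c₁ L : ℝ) (hα : 0 < α) (hc₁ : 0 < c₁) (hL : 0 < L)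
    (marg : Finset (Fin n) → ℝ) (hmpos : ∀ t : Finset (Fin n), t.Nonempty → 0 < marg t)
    (B : Finset (Finset (Fin n))) (hB : B ∈ rho n s)
    (hratio : ∀ t ∈ B, ∀ a ⊆ t, a.Nonempty → a ≠ t →
      c₁ * Real.sqrt (2 * Real.pi) / L *
          Real.sqrt ((t.card : ℝ) / ((a.card : ℝ) * ((t.card : ℝ) - (a.card : ℝ)))) ≤
        marg a * marg (t \ a) / marg t) :
    (α * c₁ * Real.sqrt (2 * Real.pi) / (2 * L) *
        ∑ t ∈ B, ∑ j ∈ Finset.Icc 1 (t.card - 1),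
          (t.card.choose j : ℝ) *
            ((Nat.factorial (j - 1) : ℝ) * (Nat.factorial (t.card - j - 1) : ℝ) /
              (Nat.factorial (t.card - 1) : ℝ)) *
            Real.sqrt ((t.card : ℝ) / ((j : ℝ) * ((t.card : ℝ) - (j : ℝ)))) ≤
      ∑ A ∈ (rho n (s + 1)).filter (fun A => MergeOf B A),
        dpWeight α n marg A / dpWeight α n marg B) ∧
    (α * c₁ * Real.sqrt (2 * Real.pi) / (2 * L) *
        ∑ t ∈ B, ∑ j ∈ Finset.Icc 1 (t.card - 1),
          (t.card.choose j : ℝ) *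
            ((Nat.factorial (j - 1) : ℝ) * (Nat.factorial (t.card - j - 1) : ℝ) /
              (Nat.factorial (t.card - 1) : ℝ)) *
            Real.sqrt ((t.card : ℝ) / ((j : ℝ) * ((t.card : ℝ) - (j : ℝ)))) =
      α * c₁ * Real.sqrt (2 * Real.pi) / (2 * L) *
        ∑ t ∈ B, ∑ j ∈ Finset.Icc 1 (t.card - 1),
          ((t.card : ℝ) / ((j : ℝ) * ((t.card : ℝ) - (j : ℝ)))) ^ ((3 : ℝ) / 2)) ∧
    (α * c₁ * Real.sqrt (2 * Real.pi) / L *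
        ((B.filter (fun t => 2 ≤ t.card)).card : ℝ) ≤
      α * c₁ * Real.sqrt (2 * Real.pi) / (2 * L) *
        ∑ t ∈ B, ∑ j ∈ Finset.Icc 1 (t.card - 1),
          ((t.card : ℝ) / ((j : ℝ) * ((t.card : ℝ) - (j : ℝ)))) ^ ((3 : ℝ) / 2)) := by
  have hBmem := Finset.mem_filter.mp hB
  have hBpart : IsPartition B := hBmem.2.1
  have hBcard : B.card = s := hBmem.2.2
  have hblock_card : ∀ t ∈ B, 1 ≤ t.card := fun t ht =>
    Finset.card_pos.mpr (Finset.nonempty_iff_ne_empty.mpr fun h => hBpart.1 (h ▸ ht))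
  -- Part 2 : the equality
  have part2 : ∀ t ∈ B, ∀ j ∈ Finset.Icc 1 (t.card - 1),
      (t.card.choose j : ℝ) *
          ((Nat.factorial (j - 1) : ℝ) * (Nat.factorial (t.card - j - 1) : ℝ) /
            (Nat.factorial (t.card - 1) : ℝ)) *
          Real.sqrt ((t.card : ℝ) / ((j : ℝ) * ((t.card : ℝ) - (j : ℝ)))) =
        ((t.card : ℝ) / ((j : ℝ) * ((t.card : ℝ) - (j : ℝ)))) ^ ((3 : ℝ) / 2) := by
    intro t ht j hj
    obtain ⟨hj1, hj2⟩ := Finset.mem_Icc.mp hj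
    have hb1 : 1 ≤ t.card := hblock_card t ht
    have hjb : j < t.card := by omega
    have hxpos : 0 < (t.card : ℝ) / ((j : ℝ) * ((t.card : ℝ) - (j : ℝ))) := by
      rw [← Nat.cast_sub (le_of_lt hjb)]
      have h1 : 0 < j := hj1
      have h2 : 0 < t.card - j := by omega
      have h3 : 0 < t.card := hb1
      positivity
    rw [Stmt18Aux.choose_frac hj1 hjb, Stmt18Aux.rpow_three_halves hxpos]
  have eq2 : (α * c₁ * Real.sqrt (2 * Real.pi) / (2 * L) *
      ∑ t ∈ B, ∑ j ∈ Finset.Icc 1 (t.card - 1),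
        (t.card.choose j : ℝ) *
          ((Nat.factorial (j - 1) : ℝ) * (Nat.factorial (t.card - j - 1) : ℝ) /
            (Nat.factorial (t.card - 1) : ℝ)) *
          Real.sqrt ((t.card : ℝ) / ((j : ℝ) * ((t.card : ℝ) - (j : ℝ)))) =
    α * c₁ * Real.sqrt (2 * Real.pi) / (2 * L) *
      ∑ t ∈ B, ∑ j ∈ Finset.Icc 1 (t.card - 1),
        ((t.card : ℝ) / ((j : ℝ) * ((t.card : ℝ) - (j : ℝ)))) ^ ((3 : ℝ) / 2)) := by
    congr 1
    exact Finset.sum_congr rfl fun t ht => Finset.sum_congr rfl fun j hj => part2 t ht j hj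
  refine ⟨?_, eq2, ?_⟩
  · 
        -- Part 1
        set W : Finset (Finset (Fin n)) → ℝ :=
          fun A => dpWeight α n marg A / dpWeight α n marg B with hW
        have hWB : 0 < dpWeight α n marg B := Stmt18Aux.dpWeight_pos hα hmpos hBpart
        set pw : Finset (Fin n) → Finset (Finset (Fin n)) :=
          fun t => t.powerset.filter (fun x => x.Nonempty ∧ x ≠ t) with hpw
        set S : Finset ((_ : Finset (Fin n)) × Finset (Fin n)) := B.sigma pw with hS
        set Phi : ((_ : Finset (Fin n)) × Finset (Fin n)) → Finset (Finset (Fin n)) :=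
          fun p => Stmt18Aux.phi B p.1 p.2 with hPhi
        set lob : ((_ : Finset (Fin n)) × Finset (Fin n)) → ℝ := fun p =>
          α * ((Nat.factorial (p.2.card - 1) : ℝ) *
              (Nat.factorial (p.1.card - p.2.card - 1) : ℝ) /
              (Nat.factorial (p.1.card - 1) : ℝ)) *
            (c₁ * Real.sqrt (2 * Real.pi) / L *
              Real.sqrt ((p.1.card : ℝ) / ((p.2.card : ℝ) * ((p.1.card : ℝ) - (p.2.card : ℝ)))))
          with hlob
        have hSmem : ∀ p ∈ S, p.1 ∈ B ∧ p.2 ⊆ p.1 ∧ p.2.Nonempty ∧ p.2 ≠ p.1 := by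
          intro p hp
          obtain ⟨h1, h2⟩ := Finset.mem_sigma.mp hp
          obtain ⟨h3, h4, h5⟩ := Finset.mem_filter.mp h2
          exact ⟨h1, Finset.mem_powerset.mp h3, h4, h5⟩
        -- pointwise lower bound
        have hptwise : ∀ p ∈ S, lob p ≤ W (Phi p) := by
          rintro ⟨t, a⟩ hp
          obtain ⟨ht, hat, hane, hne⟩ := hSmem _ hp
          have hWeq : W (Phi ⟨t, a⟩) =
              α * ((Nat.factorial (a.card - 1) : ℝ) *
                  (Nat.factorial ((t \ a).card - 1) : ℝ) /
                  (Nat.factorial (t.card - 1) : ℝ) *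
                (marg a * marg (t \ a) / marg t)) := by
            simp only [hW, hPhi]
            rw [Stmt18Aux.dpWeight_phi hα hmpos hBpart ht hat hane hne]
            exact mul_div_cancel_right₀ _ hWB.ne'
          have hcards : (t \ a).card = t.card - a.card := Finset.card_sdiff_of_subset hat
          have hfr : (0:ℝ) ≤ (Nat.factorial (a.card - 1) : ℝ) *
              (Nat.factorial (t.card - a.card - 1) : ℝ) /
              (Nat.factorial (t.card - 1) : ℝ) := by positivity
          have hR := hratio t ht a hat hane hne
          simp only [hlob]
          rw [hWeq, hcards]
          rw [mul_assoc]
          exact mul_le_mul_of_nonneg_left (mul_le_mul_of_nonneg_left hR hfr) (le_of_lt hα)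
        -- the sum over S of lob equals the explicit double sum
        have hpw_eq : ∀ t ∈ B, pw t =
            (Finset.Icc 1 (t.card - 1)).biUnion (fun j => t.powersetCard j) := by
          intro t ht
          have hb1 : 1 ≤ t.card := hblock_card t ht
          ext x
          simp only [hpw, Finset.mem_filter, Finset.mem_powerset, Finset.mem_biUnion,
            Finset.mem_Icc, Finset.mem_powersetCard]
          constructor
          · rintro ⟨hxt, hxne, hxnet⟩
            refine ⟨x.card, ⟨Finset.card_pos.mpr hxne, ?_⟩, hxt, rfl⟩
            have : x.card < t.card := Finset.card_lt_card (lt_of_le_of_ne hxt hxnet)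
            omega
          · rintro ⟨j, ⟨hj1, hj2⟩, hxt, rfl⟩
            refine ⟨hxt, Finset.card_pos.mp (by omega), ?_⟩
            intro h
            subst h
            omega
        have hSsum : ∑ p ∈ S, lob p =
            ∑ t ∈ B, ∑ j ∈ Finset.Icc 1 (t.card - 1),
              (t.card.choose j : ℝ) *
                (α * ((Nat.factorial (j - 1) : ℝ) * (Nat.factorial (t.card - j - 1) : ℝ) /
                    (Nat.factorial (t.card - 1) : ℝ)) *
                  (c₁ * Real.sqrt (2 * Real.pi) / L *
                    Real.sqrt ((t.card : ℝ) / ((j : ℝ) * ((t.card : ℝ) - (j : ℝ)))))) := by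
          rw [hS, Finset.sum_sigma]
          refine Finset.sum_congr rfl fun t ht => ?_
          rw [hpw_eq t ht, Finset.sum_biUnion]
          · refine Finset.sum_congr rfl fun j hj => ?_
            have hconst : ∀ x ∈ t.powersetCard j, lob ⟨t, x⟩ =
                α * ((Nat.factorial (j - 1) : ℝ) * (Nat.factorial (t.card - j - 1) : ℝ) /
                    (Nat.factorial (t.card - 1) : ℝ)) *
                  (c₁ * Real.sqrt (2 * Real.pi) / L *
                    Real.sqrt ((t.card : ℝ) / ((j : ℝ) * ((t.card : ℝ) - (j : ℝ))))) := by
              intro x hx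
              have hxc : x.card = j := (Finset.mem_powersetCard.mp hx).2
              simp only [hlob, hxc]
            rw [Finset.sum_congr rfl hconst, Finset.sum_const, Finset.card_powersetCard,
              nsmul_eq_mul]
          · intro i _ j _ hij
            exact Finset.disjoint_left.mpr fun x hxi hxj => hij (by
              rw [← (Finset.mem_powersetCard.mp hxi).2, (Finset.mem_powersetCard.mp hxj).2])
        -- 2-to-1 counting
        have himage : S.image Phi ⊆ (rho n (s + 1)).filter (fun A => MergeOf B A) := by
          intro A hA
          obtain ⟨p, hpS, rfl⟩ := Finset.mem_image.mp hA
          obtain ⟨ht, hat, hane, hne⟩ := hSmem _ hpS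
          refine Finset.mem_filter.mpr ⟨Finset.mem_filter.mpr ⟨Finset.mem_univ _, ?_, ?_⟩, ?_⟩
          · exact Stmt18Aux.phi_partition hBpart ht hat hane hne
          · rw [Stmt18Aux.phi_card hBpart ht hat hane hne, hBcard]
          · exact Stmt18Aux.phi_mergeOf hBpart ht hat hane hne
        have hWpos : ∀ A ∈ (rho n (s + 1)).filter (fun A => MergeOf B A), 0 ≤ W A := by
          intro A hA
          have hApart : IsPartition A := (Finset.mem_filter.mp (Finset.mem_filter.mp hA).1).2.1
          exact le_of_lt (div_pos (Stmt18Aux.dpWeight_pos hα hmpos hApart) hWB)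
        have hcomp : ∑ p ∈ S, W (Phi p) ≤
            2 * ∑ A ∈ (rho n (s + 1)).filter (fun A => MergeOf B A), W A := by
          rw [Finset.sum_comp W Phi]
          calc ∑ A ∈ S.image Phi, (S.filter fun p => Phi p = A).card • W A
              ≤ ∑ A ∈ S.image Phi, 2 * W A := by
                refine Finset.sum_le_sum fun A hA => ?_
                obtain ⟨p, hpS, hpA⟩ := Finset.mem_image.mp hA
                obtain ⟨ht, hat, hane, hne⟩ := hSmem _ hpS
                have hWA : 0 ≤ W A := hWpos A (himage hA)
                have hfib : (S.filter fun q => Phi q = A) ⊆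
                    {⟨p.1, p.2⟩, ⟨p.1, p.1 \ p.2⟩} := by
                  intro q hq
                  obtain ⟨hqS, hqA⟩ := Finset.mem_filter.mp hq
                  obtain ⟨ht', hat', hane', hne'⟩ := hSmem _ hqS
                  have := Stmt18Aux.phi_fiber hBpart ht hat hane hne ht' hat' hane' hne'
                    (hqA.trans hpA.symm)
                  obtain ⟨h1, h2⟩ := this
                  rcases h2 with h2 | h2
                  · exact Finset.mem_insert.mpr (Or.inl (Sigma.ext h1 (heq_of_eq h2)))
                  · exact Finset.mem_insert.mpr (Or.inr (Finset.mem_singleton.mpr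
                      (Sigma.ext h1 (heq_of_eq h2))))
                have hcard : ((S.filter fun q => Phi q = A).card : ℝ) ≤ 2 := by
                  have := Finset.card_le_card hfib
                  have h2 : ({⟨p.1, p.2⟩, ⟨p.1, p.1 \ p.2⟩} :
                      Finset ((_ : Finset (Fin n)) × Finset (Fin n))).card ≤ 2 :=
                    le_trans (Finset.card_insert_le _ _) (by simp)
                  exact_mod_cast le_trans this h2
                rw [nsmul_eq_mul]
                exact mul_le_mul_of_nonneg_right hcard hWA
            _ ≤ ∑ A ∈ (rho n (s + 1)).filter (fun A => MergeOf B A), 2 * W A := by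
                refine Finset.sum_le_sum_of_subset_of_nonneg himage fun A hA _ => ?_
                have := hWpos A hA
                linarith
            _ = 2 * ∑ A ∈ (rho n (s + 1)).filter (fun A => MergeOf B A), W A := by
                rw [Finset.mul_sum]
        -- assemble
        have hfinal : α * c₁ * Real.sqrt (2 * Real.pi) / (2 * L) *
            (∑ t ∈ B, ∑ j ∈ Finset.Icc 1 (t.card - 1),
              (t.card.choose j : ℝ) *
                ((Nat.factorial (j - 1) : ℝ) * (Nat.factorial (t.card - j - 1) : ℝ) /
                  (Nat.factorial (t.card - 1) : ℝ)) *
                Real.sqrt ((t.card : ℝ) / ((j : ℝ) * ((t.card : ℝ) - (j : ℝ))))) =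
            (1 / 2) * ∑ p ∈ S, lob p := by
          rw [hSsum, Finset.mul_sum, Finset.mul_sum]
          refine Finset.sum_congr rfl fun t ht => ?_
          rw [Finset.mul_sum, Finset.mul_sum]
          refine Finset.sum_congr rfl fun j hj => ?_
          field_simp
        calc α * c₁ * Real.sqrt (2 * Real.pi) / (2 * L) *
            (∑ t ∈ B, ∑ j ∈ Finset.Icc 1 (t.card - 1),
              (t.card.choose j : ℝ) *
                ((Nat.factorial (j - 1) : ℝ) * (Nat.factorial (t.card - j - 1) : ℝ) /
                  (Nat.factorial (t.card - 1) : ℝ)) *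
                Real.sqrt ((t.card : ℝ) / ((j : ℝ) * ((t.card : ℝ) - (j : ℝ)))))
            = (1 / 2) * ∑ p ∈ S, lob p := hfinal
          _ ≤ (1 / 2) * ∑ p ∈ S, W (Phi p) := by
              refine mul_le_mul_of_nonneg_left (Finset.sum_le_sum hptwise) (by norm_num)
          _ ≤ (1 / 2) * (2 * ∑ A ∈ (rho n (s + 1)).filter (fun A => MergeOf B A), W A) := by
              refine mul_le_mul_of_nonneg_left hcomp (by norm_num)
          _ = ∑ A ∈ (rho n (s + 1)).filter (fun A => MergeOf B A), W A := by ring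
  · -- Part 3
    have hC : 0 ≤ α * c₁ * Real.sqrt (2 * Real.pi) / (2 * L) := by positivity
    have hcount : 2 * ((B.filter (fun t => 2 ≤ t.card)).card : ℝ) ≤
        ∑ t ∈ B, ∑ j ∈ Finset.Icc 1 (t.card - 1),
          ((t.card : ℝ) / ((j : ℝ) * ((t.card : ℝ) - (j : ℝ)))) ^ ((3 : ℝ) / 2) := by
      calc 2 * ((B.filter (fun t => 2 ≤ t.card)).card : ℝ)
          = ∑ _t ∈ B.filter (fun t => 2 ≤ t.card), (2:ℝ) := by
            rw [Finset.sum_const, nsmul_eq_mul, mul_comm]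
        _ ≤ ∑ t ∈ B.filter (fun t => 2 ≤ t.card), ∑ j ∈ Finset.Icc 1 (t.card - 1),
              ((t.card : ℝ) / ((j : ℝ) * ((t.card : ℝ) - (j : ℝ)))) ^ ((3 : ℝ) / 2) := by
            refine Finset.sum_le_sum fun t ht => ?_
            exact Stmt18Aux.sum_rpow_ge_two (Finset.mem_filter.mp ht).2
        _ ≤ _ := by
            refine Finset.sum_le_sum_of_subset_of_nonneg (Finset.filter_subset _ _)
              fun t _ _ => Finset.sum_nonneg fun j hj => Stmt18Aux.term_nonneg hj
    have hrw : α * c₁ * Real.sqrt (2 * Real.pi) / L *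
        ((B.filter (fun t => 2 ≤ t.card)).card : ℝ) =
        α * c₁ * Real.sqrt (2 * Real.pi) / (2 * L) *
          (2 * ((B.filter (fun t => 2 ≤ t.card)).card : ℝ)) := by
      field_simp
    rw [hrw]
    exact mul_le_mul_of_nonneg_left hcount hC
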